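/- If X ~ N(m, V) with V = Σ_M ⊗ ... ⊗ Σ_1 and X is reshaped into a tensor, then E[(X − m)_{(m)} (X − m)_{(m)}^T] = (tr(⊗_{h≠m} Σ_h)) Σ_m = q_m c Σ_m, where (·)_{(m)} is mode-m matricization, q_m = ∏_{h≠m} p_h, and c = (∏_{h≠m} tr(Σ_h))/q_m; in particular E[(X−m)_{(m)}(X−m)_{(m)}^T] is proportional to Σ_m. -/

import Mathlib

open Matrix BigOperators Finset MeasureTheory

/-- The Kronecker product `Σ_M ⊗ ⋯ ⊗ Σ_1` of a family of square matrices, realized as a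
matrix indexed by multi-indices. -/
noncomputable def kronFamily {M : ℕ} {p : Fin M → ℕ}
    (S : ∀ m, Matrix (Fin (p m)) (Fin (p m)) ℝ) :
    Matrix (∀ m, Fin (p m)) (∀ m, Fin (p m)) ℝ :=
  Matrix.of fun i j => ∏ m, S m (i m) (j m)

/-- The full multi-index obtained by placing `a` at mode `m₀` and `c` elsewhere; used to
express the mode-`m₀` matricization of a tensor: `A_(m₀) (a, c) = A (mergeIdx m₀ a c)`. -/
def mergeIdx {M : ℕ} {p : Fin M → ℕ} (m₀ : Fin M) (a : Fin (p m₀))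
    (c : ∀ h : {h : Fin M // h ≠ m₀}, Fin (p h.1)) : ∀ h, Fin (p h) :=
  fun h => if hh : h = m₀ then Fin.cast (congrArg p hh).symm a else c ⟨h, hh⟩

/-- If the tensor-valued random variable `X` has mean `m` and Kronecker-separable
covariance `Cov(vec X) = Σ_M ⊗ ⋯ ⊗ Σ_1` (as holds when `vec X ~ N(vec m, Σ_M ⊗ ⋯ ⊗ Σ_1)`),
then `E[(X - m)_(m₀) (X - m)_(m₀)ᵀ] = (∏_{h ≠ m₀} tr Σ_h) Σ_{m₀}`; in particular this
second-moment matrix is proportional to `Σ_{m₀}`. -/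
theorem mode_matricization_second_moment {M : ℕ} {p : Fin M → ℕ}
    {Ω : Type*} [MeasurableSpace Ω] (P : Measure Ω) [IsProbabilityMeasure P]
    (X : Ω → (∀ m, Fin (p m)) → ℝ) (m : (∀ m, Fin (p m)) → ℝ)
    (S : ∀ m, Matrix (Fin (p m)) (Fin (p m)) ℝ)
    (hcov : ∀ J J' : ∀ m, Fin (p m),
      ∫ ω, (X ω J - m J) * (X ω J' - m J') ∂P = kronFamily S J J')
    (m₀ : Fin M) (a b : Fin (p m₀)) :
    (∑ c : ∀ h : {h : Fin M // h ≠ m₀}, Fin (p h.1),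
        ∫ ω, (X ω (mergeIdx m₀ a c) - m (mergeIdx m₀ a c)) *
          (X ω (mergeIdx m₀ b c) - m (mergeIdx m₀ b c)) ∂P) =
      (∏ h ∈ Finset.univ.erase m₀, (S h).trace) * S m₀ a b := by
  simp only [hcov, kronFamily, Matrix.of_apply]
  have key : ∀ c : ∀ h : {h : Fin M // h ≠ m₀}, Fin (p h.1),
      (∏ h, S h (mergeIdx m₀ a c h) (mergeIdx m₀ b c h)) =
      (∏ h : {h : Fin M // h ≠ m₀}, S h.1 (c h) (c h)) * S m₀ a b := by
    intro c
    rw [← Finset.prod_erase_mul (a := m₀) (h := Finset.mem_univ m₀)]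
    congr 1
    · refine Finset.prod_bij' (fun x hx => (⟨x, by simpa using hx⟩ : {h // h ≠ m₀}))
        (fun h _ => (h : Fin M)) (fun _ _ => Finset.mem_univ _)
        (fun h _ => by simpa using h.2) (fun _ _ => rfl) (fun _ _ => rfl) ?_
      intro x hx
      have hne : x ≠ m₀ := by simpa using hx
      simp [mergeIdx, hne]
    · simp [mergeIdx]
  simp only [key]
  rw [← Finset.sum_mul]
  congr 1
  have htr : (∏ h ∈ Finset.univ.erase m₀, (S h).trace) =
      ∏ h : {h : Fin M // h ≠ m₀}, (S h.1).trace := by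
    refine Finset.prod_bij' (fun x hx => (⟨x, by simpa using hx⟩ : {h // h ≠ m₀}))
      (fun h _ => (h : Fin M)) (fun _ _ => Finset.mem_univ _)
      (fun h _ => by simpa using h.2) (fun _ _ => rfl) (fun _ _ => rfl)
      (fun _ _ => rfl)
  rw [htr]
  simp only [Matrix.trace, Matrix.diag]
  rw [Finset.prod_univ_sum, ← Fintype.piFinset_univ]
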